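/- arXiv:1710.03263 — 2 statements merged into one kernel-verified Lean document; each statement's English description precedes it below -/
import Mathlib

section
/- Let f be a piecewise polynomial function on a box Ω₀ ⊂ ℝⁿ of the form f(x) = Σ_{k=1}^K P_k(x)·1_{B_k}(x), where the B_k ⊂ Ω₀ are pairwise disjoint axis-aligned boxes and each P_k is a polynomial of total degree at most r−1. Then there exists an adaptive tree partition 𝒯 of Ω₀ (using axis-aligned hyperplane splits) such that f belongs to the Besov-type space B_τ^{α,r}(𝒯) for every α > 0. -/
open MeasureTheory
open scoped ENNReal

/-- The `r`-th order difference `Δ_h^r(f, Ω, x)`, set to `0` when `[x, x+rh] ⊄ Ω`. -/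
noncomputable def rDiff {n : ℕ} (r : ℕ) (f : EuclideanSpace ℝ (Fin n) → ℝ)
    (Ω : Set (EuclideanSpace ℝ (Fin n))) (h x : EuclideanSpace ℝ (Fin n)) : ℝ :=
  Set.indicator {y | segment ℝ y (y + (r : ℝ) • h) ⊆ Ω}
    (fun y => ∑ k ∈ Finset.range (r + 1),
      (-1 : ℝ) ^ (r + k) * (r.choose k : ℝ) * f (y + (k : ℝ) • h)) x

/-- The modulus of smoothness `ω_r(f, Ω)_τ = sup_{|h| ≤ diam(Ω)/r} ‖Δ_h^r(f, Ω, ·)‖_{L_τ(Ω)}`. -/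
noncomputable def modulusR {n : ℕ} (r : ℕ) (f : EuclideanSpace ℝ (Fin n) → ℝ)
    (Ω : Set (EuclideanSpace ℝ (Fin n))) (τ : ℝ) : ℝ≥0∞ :=
  ⨆ (h : EuclideanSpace ℝ (Fin n)) (_ : ‖h‖ ≤ Metric.diam Ω / r),
    eLpNorm (fun x => rDiff r f Ω h x) (ENNReal.ofReal τ) (volume.restrict Ω)

/-- The `τ`-th power of the Besov-type semi-norm
`|f|_{B_τ^{α,r}(𝒯)} = (Σ_{Ω ∈ 𝒯} (|Ω|^{-α} ω_r(f,Ω)_τ)^τ)^{1/τ}` of a tree `𝒯`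
whose node `(l, j)` is the `j`-th cell at level `l`. -/
noncomputable def besovTreeSeminormTau {n : ℕ} (r : ℕ) (α τ : ℝ)
    (f : EuclideanSpace ℝ (Fin n) → ℝ)
    (cells : ℕ → ℕ → Set (EuclideanSpace ℝ (Fin n))) : ℝ≥0∞ :=
  ∑' (l : ℕ) (j : ℕ), (volume (cells l j) ^ (-α) * modulusR r f (cells l j) τ) ^ τ

section AuxPoly

open MvPolynomial

variable {σ : Type*} {M : Type*}

lemma auxProdDeg (g : σ → ℝ) (s : Multiset σ) :
    ((s.map (fun i => X i + C (g i) : σ → MvPolynomial σ ℝ)).prod).totalDegree ≤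
      Multiset.card s := by
  refine le_trans (totalDegree_multiset_prod _) ?_
  rw [Multiset.map_map]
  refine le_trans (Multiset.sum_le_card_nsmul _ 1 ?_) ?_
  · intro x hx
    obtain ⟨i, _, rfl⟩ := Multiset.mem_map.mp hx
    exact le_trans (totalDegree_add _ _) (by simp)
  · simp

lemma auxMultisetDiff (g : σ → ℝ) (s : Multiset σ) :
    ((s.map (fun i => X i + C (g i) : σ → MvPolynomial σ ℝ)).prod - (s.map X).prod) = 0 ∨
    ((s.map (fun i => X i + C (g i) : σ → MvPolynomial σ ℝ)).prod - (s.map X).prod).totalDegree + 1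
      ≤ Multiset.card s := by
  induction s using Multiset.induction_on with
  | empty => left; simp
  | cons i t ih =>
    right
    have hA := auxProdDeg g t
    have key : (((i ::ₘ t).map (fun i => X i + C (g i) : σ → MvPolynomial σ ℝ)).prod
          - ((i ::ₘ t).map X).prod)
        = X i * ((t.map (fun i => X i + C (g i) : σ → MvPolynomial σ ℝ)).prod - (t.map X).prod)
          + C (g i) * (t.map (fun i => X i + C (g i) : σ → MvPolynomial σ ℝ)).prod := by
      simp only [Multiset.map_cons, Multiset.prod_cons]
      ring
    rw [key, Multiset.card_cons]
    have h2 : (C (g i) * (t.map (fun i => X i + C (g i) : σ → MvPolynomial σ ℝ)).prod).totalDegree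
        ≤ Multiset.card t :=
      le_trans (totalDegree_mul _ _) (by simpa using hA)
    have h1 : (X i * ((t.map (fun i => X i + C (g i) : σ → MvPolynomial σ ℝ)).prod
        - (t.map X).prod)).totalDegree ≤ Multiset.card t := by
      rcases ih with h0 | hlt
      · rw [h0, mul_zero]; simp
      · refine le_trans (totalDegree_mul _ _) ?_
        rw [totalDegree_X]
        omega
    have h3 := totalDegree_add
      (X i * ((t.map (fun i => X i + C (g i) : σ → MvPolynomial σ ℝ)).prod - (t.map X).prod))
      (C (g i) * (t.map (fun i => X i + C (g i) : σ → MvPolynomial σ ℝ)).prod)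
    have h4 := max_le h1 h2
    omega

lemma auxMonomialProd [CommMonoid M] (d : σ →₀ ℕ) (g : σ → M) :
    (d.prod fun i e => g i ^ e) = (d.toMultiset.map g).prod := by
  rw [Finsupp.toMultiset_map, Finsupp.prod_toMultiset]
  exact (Finsupp.prod_mapDomain_index (h := fun b m => b ^ m) (fun _ => pow_zero _)
    (fun _ _ _ => pow_add _ _ _)).symm

lemma auxShiftMonomial (g : σ → ℝ) (d : σ →₀ ℕ) (cc : ℝ) :
    aeval (fun i => X i + C (g i) : σ → MvPolynomial σ ℝ) (monomial d cc)
      = C cc * (d.toMultiset.map (fun i => X i + C (g i) : σ → MvPolynomial σ ℝ)).prod := by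
  rw [aeval_monomial, auxMonomialProd]
  rfl

lemma auxMonomialEq (d : σ →₀ ℕ) (cc : ℝ) :
    (monomial d cc : MvPolynomial σ ℝ) = C cc * (d.toMultiset.map X).prod := by
  rw [monomial_eq, auxMonomialProd]

lemma auxShiftDeg (g : σ → ℝ) (Q : MvPolynomial σ ℝ) :
    (aeval (fun i => X i + C (g i) : σ → MvPolynomial σ ℝ) Q - Q = 0) ∨
    (aeval (fun i => X i + C (g i) : σ → MvPolynomial σ ℝ) Q - Q).totalDegree + 1
      ≤ Q.totalDegree := by
  classical
  set F : (σ →₀ ℕ) → MvPolynomial σ ℝ := fun d =>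
    C (coeff d Q) * ((d.toMultiset.map (fun i => X i + C (g i) : σ → MvPolynomial σ ℝ)).prod
      - (d.toMultiset.map X).prod) with hF
  have hsum : aeval (fun i => X i + C (g i) : σ → MvPolynomial σ ℝ) Q - Q
      = ∑ d ∈ Q.support, F d := by
    conv_lhs => rw [← support_sum_monomial_coeff Q]
    rw [map_sum, ← Finset.sum_sub_distrib]
    refine Finset.sum_congr rfl fun d _ => ?_
    simp only [hF]
    rw [auxShiftMonomial, mul_sub, ← auxMonomialEq]
  have hcard : ∀ d ∈ Q.support, Multiset.card d.toMultiset ≤ Q.totalDegree := by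
    intro d hd
    rw [Finsupp.card_toMultiset]
    exact le_totalDegree hd
  have hd : ∀ d ∈ Q.support, F d = 0 ∨ (F d).totalDegree + 1 ≤ Q.totalDegree := by
    intro d hd
    rcases auxMultisetDiff g d.toMultiset with h0 | hlt
    · left; rw [hF]; simp only [h0, mul_zero]
    · right
      simp only [hF]
      have := totalDegree_mul (C (coeff d Q))
        ((d.toMultiset.map (fun i => X i + C (g i) : σ → MvPolynomial σ ℝ)).prod
          - (d.toMultiset.map X).prod)
      have hC : (C (coeff d Q) : MvPolynomial σ ℝ).totalDegree = 0 := totalDegree_C _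
      have := hcard d hd
      omega
  by_cases hall : ∀ d ∈ Q.support, F d = 0
  · left; rw [hsum]; exact Finset.sum_eq_zero hall
  · right
    push_neg at hall
    obtain ⟨d₀, hd₀, hne⟩ := hall
    have hQ1 : 1 ≤ Q.totalDegree := by
      rcases hd d₀ hd₀ with h | h
      · exact absurd h hne
      · omega
    rw [hsum]
    have : (∑ d ∈ Q.support, F d).totalDegree ≤ Q.totalDegree - 1 := by
      refine totalDegree_finsetSum_le fun d hdd => ?_
      rcases hd d hdd with h | h
      · rw [h]; simp
      · omega
    omega

lemma auxEvalShift (g : σ → ℝ) (y : σ → ℝ) (Q : MvPolynomial σ ℝ) :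
    eval y (aeval (fun i => X i + C (g i) : σ → MvPolynomial σ ℝ) Q)
      = eval (fun i => y i + g i) Q := by
  have : (MvPolynomial.eval y).comp
      ((aeval (fun i => X i + C (g i) : σ → MvPolynomial σ ℝ)).toRingHom)
      = MvPolynomial.eval (fun i => y i + g i) := by
    apply MvPolynomial.ringHom_ext <;> intro i <;> simp
  exact RingHom.congr_fun this Q

lemma auxFwdDiffEval (g : σ → ℝ) (Q : MvPolynomial σ ℝ) :
    fwdDiff g (fun y : σ → ℝ => eval y Q)
      = fun y => eval y (aeval (fun i => X i + C (g i) : σ → MvPolynomial σ ℝ) Q - Q) := by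
  funext y
  have h1 : (y + g) = fun i => y i + g i := rfl
  simp only [fwdDiff, map_sub, auxEvalShift, h1]

lemma auxIterZero (g : σ → ℝ) (r : ℕ) (Q : MvPolynomial σ ℝ) (hQ : Q.totalDegree < r) :
    (fwdDiff g)^[r] (fun y : σ → ℝ => eval y Q) = fun _ => (0 : ℝ) := by
  induction r generalizing Q with
  | zero => omega
  | succ s ih =>
    rw [Function.iterate_succ_apply, auxFwdDiffEval]
    rcases auxShiftDeg g Q with h0 | hlt
    · rw [h0]
      have hzero : (fun y : σ → ℝ => eval y (0 : MvPolynomial σ ℝ)) = fun _ => (0:ℝ) := by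
        simp
      rw [hzero]
      exact Function.iterate_fixed (fwdDiff_const g (0:ℝ)) s
    · exact ih _ (by omega)

lemma lemD {n : ℕ} {r : ℕ} (Q : MvPolynomial (Fin n) ℝ) (hQ : Q.totalDegree < r)
    (x h : Fin n → ℝ) :
    ∑ k ∈ Finset.range (r + 1),
      (-1 : ℝ) ^ (r + k) * (r.choose k : ℝ) * eval (fun i => x i + (k : ℝ) * h i) Q = 0 := by
  have h0 := auxIterZero h r Q hQ
  have h1 := fwdDiff_iter_eq_sum_shift h (fun y : Fin n → ℝ => eval y Q) r x
  rw [h0] at h1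
  have h2 : ∀ k ∈ Finset.range (r + 1),
      ((-1 : ℤ) ^ (r - k) * (r.choose k : ℤ)) • eval (x + k • h) Q
        = (-1 : ℝ) ^ (r + k) * (r.choose k : ℝ) * eval (fun i => x i + (k : ℝ) * h i) Q := by
    intro k hk
    have hk' : k ≤ r := by
      have := Finset.mem_range.mp hk; omega
    have harg : (x + k • h) = fun i => x i + (k : ℝ) * h i := by
      funext i
      simp [nsmul_eq_mul]
    have hsign : ((-1 : ℝ)) ^ (r - k) = (-1) ^ (r + k) := by
      have hrk : r + k = (r - k) + 2 * k := by omega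
      rw [hrk, pow_add, pow_mul]
      norm_num
    rw [harg, zsmul_eq_mul]
    push_cast [hsign]
    ring
  rw [Finset.sum_congr rfl h2] at h1
  simpa using h1.symm

end AuxPoly

section AuxTree

/-- Binary tree of cells obtained by splitting with hyperplane `c l` at level `l`. -/
def treeCells {n : ℕ} (Ω₀ : Set (EuclideanSpace ℝ (Fin n))) (c : ℕ → Fin n × ℝ) :
    ℕ → ℕ → Set (EuclideanSpace ℝ (Fin n))
  | 0, j => if j = 0 then Ω₀ else ∅
  | (l + 1), j =>
    if j % 2 = 0 then treeCells Ω₀ c l (j / 2) ∩ {x | x (c l).1 ≤ (c l).2}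
    else treeCells Ω₀ c l (j / 2) ∩ {x | (c l).2 < x (c l).1}

variable {n : ℕ} {Ω₀ : Set (EuclideanSpace ℝ (Fin n))} {c : ℕ → Fin n × ℝ}

lemma treeCells_even (l j : ℕ) :
    treeCells Ω₀ c (l + 1) (2 * j) = treeCells Ω₀ c l j ∩ {x | x (c l).1 ≤ (c l).2} := by
  have h1 : (2 * j) % 2 = 0 := by omega
  have h2 : (2 * j) / 2 = j := by omega
  simp [treeCells, h1, h2]

lemma treeCells_odd (l j : ℕ) :
    treeCells Ω₀ c (l + 1) (2 * j + 1) = treeCells Ω₀ c l j ∩ {x | (c l).2 < x (c l).1} := by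
  have h1 : (2 * j + 1) % 2 = 1 := by omega
  have h2 : (2 * j + 1) / 2 = j := by omega
  simp [treeCells, h1, h2]

lemma treeCells_subset (l j : ℕ) : treeCells Ω₀ c l j ⊆ Ω₀ := by
  induction l generalizing j with
  | zero =>
    by_cases h : j = 0 <;> simp [treeCells, h]
  | succ l ih =>
    by_cases h : j % 2 = 0 <;>
      simp only [treeCells, h, if_true, if_false, reduceIte] <;>
      exact (Set.inter_subset_left).trans (ih _)

lemma treeCells_empty_of_large (l j : ℕ) (h : 2 ^ l ≤ j) : treeCells Ω₀ c l j = ∅ := by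
  induction l generalizing j with
  | zero =>
    have : j ≠ 0 := by simpa using Nat.one_le_iff_ne_zero.mp h
    simp [treeCells, this]
  | succ l ih =>
    have h2 : 2 ^ l ≤ j / 2 := by
      rw [Nat.le_div_iff_mul_le (by norm_num)]
      calc 2 ^ l * 2 = 2 ^ (l + 1) := by ring
      _ ≤ j := h
    rw [treeCells]
    split <;> rw [ih _ h2, Set.empty_inter]

lemma treeCells_side (l m j : ℕ) (hm : m < l) :
    treeCells Ω₀ c l j ⊆ {x | x (c m).1 ≤ (c m).2} ∨
    treeCells Ω₀ c l j ⊆ {x | (c m).2 < x (c m).1} := by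
  induction l generalizing j with
  | zero => omega
  | succ l ih =>
    rcases Nat.lt_succ_iff_lt_or_eq.mp hm with hm' | rfl
    · have hsub : treeCells Ω₀ c (l + 1) j ⊆ treeCells Ω₀ c l (j / 2) := by
        rw [treeCells]; split <;> exact Set.inter_subset_left
      exact (ih (j / 2) hm').imp hsub.trans hsub.trans
    · rw [treeCells]
      split
      · exact Or.inl Set.inter_subset_right
      · exact Or.inr Set.inter_subset_right

end AuxTree

section AuxMeasure

lemma hyperplane_null {n : ℕ} (i : Fin n) (t : ℝ) :
    volume {x : EuclideanSpace ℝ (Fin n) | x i = t} = 0 := by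
  have hset : {x : EuclideanSpace ℝ (Fin n) | x i = t}
      = (MeasurableEquiv.toLp 2 (Fin n → ℝ)).symm ⁻¹' {y : Fin n → ℝ | y i = t} := rfl
  have hmeas : MeasurableSet {y : Fin n → ℝ | y i = t} := by
    have := (measurable_pi_apply (X := fun _ : Fin n => ℝ) i) (measurableSet_singleton t)
    simpa [Set.preimage] using this
  rw [hset, (EuclideanSpace.volume_preserving_symm_measurableEquiv_toLp
      (Fin n)).measure_preimage hmeas.nullMeasurableSet]
  rw [MeasureTheory.volume_pi]
  exact Measure.pi_hyperplane (fun _ : Fin n => (volume : Measure ℝ)) i t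

lemma box_compact {n : ℕ} (a b : Fin n → ℝ) :
    IsCompact {x : EuclideanSpace ℝ (Fin n) | ∀ i, x i ∈ Set.Icc (a i) (b i)} := by
  have h1 : IsCompact (Set.univ.pi fun i => Set.Icc (a i) (b i)) :=
    isCompact_univ_pi fun i => isCompact_Icc
  have h2 : {x : EuclideanSpace ℝ (Fin n) | ∀ i, x i ∈ Set.Icc (a i) (b i)}
      = (PiLp.continuousLinearEquiv 2 ℝ (fun _ : Fin n => ℝ)).symm ''
        (Set.univ.pi fun i => Set.Icc (a i) (b i)) := by
    rw [ContinuousLinearEquiv.image_symm_eq_preimage]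
    ext x
    simp only [Set.mem_setOf_eq, Set.mem_preimage, Set.mem_pi, Set.mem_univ, forall_true_left]
    exact Iff.rfl
  rw [h2]
  exact h1.image (PiLp.continuousLinearEquiv 2 ℝ _).symm.continuous

lemma poly_cont {n : ℕ} (P : MvPolynomial (Fin n) ℝ) :
    Continuous fun x : EuclideanSpace ℝ (Fin n) => MvPolynomial.eval (fun i => x i) P := by
  exact (MvPolynomial.continuous_eval P).comp
    (PiLp.continuousLinearEquiv 2 ℝ (fun _ : Fin n => ℝ)).continuous

end AuxMeasure

/-- A piecewise polynomial `f = Σ_k P_k 1_{B_k}` over pairwise disjoint axis-aligned boxes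
`B_k` inside a box `Ω₀ ⊂ ℝⁿ`, with `deg P_k ≤ r - 1`, admits an adaptive tree partition `𝒯`
of `Ω₀` (axis-aligned hyperplane splits, children `(l+1,2j), (l+1,2j+1)` of node `(l,j)`)
such that `f ∈ B_τ^{α,r}(𝒯)` for every `α > 0` (with `1/τ = α + 1/p`). -/
theorem stmt_0 {n : ℕ} (hn : 0 < n) (r : ℕ) (hr : 1 ≤ r) (p : ℝ) (hp : 0 < p)
    (a b : Fin n → ℝ) (hab : ∀ i, a i < b i)
    (Ω₀ : Set (EuclideanSpace ℝ (Fin n)))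
    (hΩ₀ : Ω₀ = {x | ∀ i, x i ∈ Set.Icc (a i) (b i)})
    (K : ℕ) (lo hi : Fin K → Fin n → ℝ)
    (B : Fin K → Set (EuclideanSpace ℝ (Fin n)))
    (hB : ∀ k, B k = {x | ∀ i, x i ∈ Set.Icc (lo k i) (hi k i)})
    (hBsub : ∀ k, B k ⊆ Ω₀)
    (hBdisj : ∀ k j, k ≠ j → Disjoint (B k) (B j))
    (P : Fin K → MvPolynomial (Fin n) ℝ) (hP : ∀ k, (P k).totalDegree ≤ r - 1)
    (f : EuclideanSpace ℝ (Fin n) → ℝ)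
    (hf : ∀ x, f x = ∑ k, (B k).indicator
        (fun y => MvPolynomial.eval (fun i => y i) (P k)) x) :
    ∃ cells : ℕ → ℕ → Set (EuclideanSpace ℝ (Fin n)),
      cells 0 0 = Ω₀ ∧ (∀ j, j ≠ 0 → cells 0 j = ∅) ∧
      (∀ l j, cells (l + 1) (2 * j) ∪ cells (l + 1) (2 * j + 1) = cells l j) ∧
      (∀ l j, Disjoint (cells (l + 1) (2 * j)) (cells (l + 1) (2 * j + 1))) ∧
      (∀ l j, ∃ (i : Fin n) (t : ℝ),
        cells (l + 1) (2 * j) = cells l j ∩ {x | x i ≤ t} ∧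
        cells (l + 1) (2 * j + 1) = cells l j ∩ {x | t < x i}) ∧
      (∀ α : ℝ, 0 < α → besovTreeSeminormTau r α (α + 1 / p)⁻¹ f cells < ⊤) := by
  classical
  set i₀ : Fin n := ⟨0, hn⟩ with hi₀
  set Lcuts : List (Fin n × ℝ) :=
    (List.finRange K).flatMap fun k =>
      (List.finRange n).flatMap fun i => [(i, lo k i), (i, hi k i)] with hLcuts
  set cfun : ℕ → Fin n × ℝ := fun m => Lcuts.getD m (i₀, b i₀) with hcfun
  refine ⟨treeCells Ω₀ cfun, by simp [treeCells], fun j hj => by simp [treeCells, hj],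
    ?_, ?_, ?_, ?_⟩
  · -- union
    intro l j
    rw [treeCells_even, treeCells_odd, ← Set.inter_union_distrib_left]
    have huniv : {x : EuclideanSpace ℝ (Fin n) | x (cfun l).1 ≤ (cfun l).2}
        ∪ {x | (cfun l).2 < x (cfun l).1} = Set.univ := by
      ext x; simp [le_or_gt]
    rw [huniv, Set.inter_univ]
  · -- disjoint
    intro l j
    rw [treeCells_even, treeCells_odd]
    refine Set.disjoint_left.mpr ?_
    rintro x ⟨-, hx1⟩ ⟨-, hx2⟩
    simp only [Set.mem_setOf_eq] at hx1 hx2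
    linarith
  · -- hyperplane splits
    intro l j
    exact ⟨(cfun l).1, (cfun l).2, treeCells_even l j, treeCells_odd l j⟩
  · -- finiteness of the Besov seminorm
    intro α hα
    set τ : ℝ := (α + 1 / p)⁻¹ with hτdef
    have hτ : 0 < τ := inv_pos.mpr (add_pos hα (one_div_pos.mpr hp))
    -- volume of Ω₀ is finite
    have hΩvol : volume Ω₀ < ⊤ := by
      rw [hΩ₀]; exact (box_compact a b).measure_lt_top
    -- a uniform bound for f
    obtain ⟨Cf, hCf0, hCf⟩ : ∃ Cf : ℝ, 0 ≤ Cf ∧ ∀ x, |f x| ≤ Cf := by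
      have hk : ∀ k : Fin K, ∃ Ck : ℝ, 0 ≤ Ck ∧ ∀ x,
          |Set.indicator (B k) (fun y => MvPolynomial.eval (fun i => y i) (P k)) x| ≤ Ck := by
        intro k
        have hcomp : IsCompact (B k) := by rw [hB k]; exact box_compact _ _
        obtain ⟨Ck, hCk⟩ := hcomp.exists_bound_of_continuousOn ((poly_cont (P k)).continuousOn)
        refine ⟨max Ck 0, le_max_right _ _, fun x => ?_⟩
        by_cases hx : x ∈ B k
        · rw [Set.indicator_of_mem hx]
          exact le_trans (by simpa [Real.norm_eq_abs] using hCk x hx) (le_max_left _ _)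
        · rw [Set.indicator_of_notMem hx]
          simpa using le_max_right Ck 0
      choose Ck hCk0 hCk using hk
      refine ⟨∑ k, Ck k, Finset.sum_nonneg fun k _ => hCk0 k, fun x => ?_⟩
      rw [hf x]
      exact le_trans (Finset.abs_sum_le_sum_abs _ _) (Finset.sum_le_sum fun k _ => hCk k x)
    -- a uniform bound for rDiff
    have hD : ∀ (S : Set (EuclideanSpace ℝ (Fin n))) (h x : EuclideanSpace ℝ (Fin n)),
        |rDiff r f S h x| ≤ 2 ^ r * Cf := by
      intro S h x
      have h2r : (0:ℝ) ≤ 2 ^ r * Cf := by positivity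
      by_cases hx : x ∈ {y | segment ℝ y (y + (r : ℝ) • h) ⊆ S}
      · rw [rDiff, Set.indicator_of_mem hx]
        refine le_trans (Finset.abs_sum_le_sum_abs _ _) ?_
        have hterm : ∀ k ∈ Finset.range (r + 1),
            |(-1 : ℝ) ^ (r + k) * (r.choose k : ℝ) * f (x + (k : ℝ) • h)|
              ≤ (r.choose k : ℝ) * Cf := by
          intro k _
          rw [abs_mul, abs_mul, abs_pow, abs_neg, abs_one, one_pow, one_mul,
            Nat.abs_cast]
          exact mul_le_mul_of_nonneg_left (hCf _) (Nat.cast_nonneg _)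
        refine le_trans (Finset.sum_le_sum hterm) ?_
        rw [← Finset.sum_mul]
        have : (∑ k ∈ Finset.range (r + 1), (r.choose k : ℝ)) = 2 ^ r := by
          rw [← Nat.cast_sum]
          rw [Nat.sum_range_choose]
          push_cast
          ring
        rw [this]
      · rw [rDiff, Set.indicator_of_notMem hx]
        simpa using h2r
    -- bound for the modulus over subsets of Ω₀
    have hmodbd : ∀ S : Set (EuclideanSpace ℝ (Fin n)), S ⊆ Ω₀ →
        modulusR r f S τ ≤ (volume Ω₀) ^ τ⁻¹ * ENNReal.ofReal (2 ^ r * Cf) := by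
      intro S hS
      refine iSup_le fun h => iSup_le fun _ => ?_
      have h1 := eLpNorm_le_of_ae_bound (p := ENNReal.ofReal τ)
        (μ := volume.restrict S) (f := fun x => rDiff r f S h x)
        (Filter.Eventually.of_forall fun x => by
          simpa [Real.norm_eq_abs] using hD S h x)
      refine le_trans h1 ?_
      rw [Measure.restrict_apply_univ, ENNReal.toReal_ofReal hτ.le]
      exact mul_le_mul_left (ENNReal.rpow_le_rpow (measure_mono hS)
        (inv_nonneg.mpr hτ.le)) _
    have hBndlt : (volume Ω₀) ^ τ⁻¹ * ENNReal.ofReal (2 ^ r * Cf) < ⊤ :=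
      ENNReal.mul_lt_top (ENNReal.rpow_lt_top_of_nonneg (inv_nonneg.mpr hτ.le) hΩvol.ne)
        ENNReal.ofReal_lt_top
    -- modulus vanishes on null sets
    have hmod0 : ∀ S : Set (EuclideanSpace ℝ (Fin n)), volume S = 0 →
        modulusR r f S τ = 0 := by
      intro S hS
      refine le_antisymm (iSup_le fun h => iSup_le fun _ => le_of_eq ?_) (zero_le ..)
      rw [Measure.restrict_eq_zero.mpr hS, eLpNorm_measure_zero]
    -- membership of the cuts
    have hmem : ∀ (k : Fin K) (i : Fin n), (i, lo k i) ∈ Lcuts ∧ (i, hi k i) ∈ Lcuts := by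
      intro k i
      constructor <;>
      · rw [hLcuts]
        rw [List.mem_flatMap]
        exact ⟨k, List.mem_finRange k, by
          rw [List.mem_flatMap]
          exact ⟨i, List.mem_finRange i, by simp⟩⟩
    -- side dichotomy for deep cells
    have hside : ∀ l j, Lcuts.length ≤ l → ∀ i t, (i, t) ∈ Lcuts →
        treeCells Ω₀ cfun l j ⊆ {x | x i ≤ t} ∨
        treeCells Ω₀ cfun l j ⊆ {x | t < x i} := by
      intro l j hl i t hm'
      obtain ⟨m, hmlt, hget⟩ := List.mem_iff_getElem.mp hm'
      have hc : cfun m = (i, t) := by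
        rw [hcfun]
        simp only []
        rw [List.getD_eq_getElem Lcuts _ hmlt]
        exact hget
      have := treeCells_side (Ω₀ := Ω₀) (c := cfun) l m j (lt_of_lt_of_le hmlt hl)
      rw [hc] at this
      exact this
    -- the modulus vanishes on deep cells
    have hdeep : ∀ l j, Lcuts.length ≤ l → modulusR r f (treeCells Ω₀ cfun l j) τ = 0 := by
      intro l j hl
      set S := treeCells Ω₀ cfun l j with hSdef
      set N : Set (EuclideanSpace ℝ (Fin n)) :=
        ⋃ k : Fin K, ⋃ i : Fin n, ({x | x i = lo k i} ∪ {x | x i = hi k i}) with hN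
      have hNnull : volume N = 0 := by
        rw [hN]
        exact measure_iUnion_null fun k => measure_iUnion_null fun i =>
          measure_union_null (hyperplane_null _ _) (hyperplane_null _ _)
      have hcontain : ∀ x ∈ S, x ∉ N → ∀ k : Fin K, x ∈ B k → S ⊆ B k := by
        intro x hxS hxN k hxB
        intro y hyS
        rw [hB k]
        intro i
        have hxB' : lo k i ≤ x i ∧ x i ≤ hi k i := by
          have := (hB k) ▸ hxB
          exact this i
        have hloc := hside l j hl i (lo k i) (hmem k i).1
        have hhic := hside l j hl i (hi k i) (hmem k i).2
        rcases hloc with hc1 | hc2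
        · exfalso
          apply hxN
          have hle : x i ≤ lo k i := hc1 hxS
          have heq : x i = lo k i := le_antisymm hle hxB'.1
          rw [hN]
          refine Set.mem_iUnion.mpr ⟨k, Set.mem_iUnion.mpr ⟨i, Or.inl heq⟩⟩
        rcases hhic with hd1 | hd2
        · exact ⟨le_of_lt (hc2 hyS), hd1 hyS⟩
        · exfalso
          exact absurd (hd2 hxS) (not_lt.mpr hxB'.2)
      set sQ : Finset (Fin K) := Finset.univ.filter (fun k => S ⊆ B k) with hsQ
      set Q : MvPolynomial (Fin n) ℝ := ∑ k ∈ sQ, P k with hQ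
      have hQdeg : Q.totalDegree < r := by
        have h1 : Q.totalDegree ≤ r - 1 :=
          MvPolynomial.totalDegree_finsetSum_le fun k _ => hP k
        omega
      have hfQ : ∀ z, z ∈ S → z ∉ N → f z = MvPolynomial.eval (fun i => z i) Q := by
        intro z hzS hzN
        rw [hf z, hQ, map_sum]
        have hterm : ∀ k : Fin K,
            Set.indicator (B k) (fun y => MvPolynomial.eval (fun i => y i) (P k)) z
            = if k ∈ sQ then MvPolynomial.eval (fun i => z i) (P k) else 0 := by
          intro k
          by_cases hk : S ⊆ B k
          · have hk' : k ∈ sQ := by rw [hsQ]; simp [hk]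
            rw [if_pos hk', Set.indicator_of_mem (hk hzS)]
          · have hk' : k ∉ sQ := by rw [hsQ]; simp [hk]
            rw [if_neg hk', Set.indicator_of_notMem]
            intro hzB
            exact hk (hcontain z hzS hzN k hzB)
        rw [Finset.sum_congr rfl fun k _ => hterm k]
        rw [Finset.sum_ite_mem, Finset.univ_inter]
      refine le_antisymm (iSup_le fun h => iSup_le fun _ => le_of_eq ?_) (zero_le ..)
      set Bad : Set (EuclideanSpace ℝ (Fin n)) :=
        ⋃ k : Fin (r + 1), (fun x => x + ((k : ℕ) : ℝ) • h) ⁻¹' N with hBadDef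
      have hBadnull : volume Bad = 0 := by
        rw [hBadDef]
        refine measure_iUnion_null fun k => ?_
        rw [measure_preimage_add_right]
        exact hNnull
      have hz : ∀ x, x ∉ Bad → rDiff r f S h x = 0 := by
        intro x hx
        by_cases hseg : x ∈ {y | segment ℝ y (y + (r : ℝ) • h) ⊆ S}
        · rw [rDiff, Set.indicator_of_mem hseg]
          have hr0 : (r : ℝ) ≠ 0 := Nat.cast_ne_zero.mpr (by omega)
          have hpt : ∀ k, k ∈ Finset.range (r + 1) →
              x + (k : ℝ) • h ∈ S ∧ x + (k : ℝ) • h ∉ N := by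
            intro k hk
            have hk' : k ≤ r := by
              have := Finset.mem_range.mp hk; omega
            constructor
            · apply hseg
              refine ⟨1 - (k : ℝ) / r, (k : ℝ) / r, ?_, ?_, by ring, ?_⟩
              · have : (k : ℝ) / r ≤ 1 := by
                  rw [div_le_one (by positivity)]
                  exact_mod_cast hk'
                linarith
              · positivity
              · have hkr : (k : ℝ) / r * r = k := div_mul_cancel₀ _ hr0
                rw [smul_add, smul_smul, hkr, sub_smul, one_smul]
                abel
            · intro hmemN
              apply hx
              rw [hBadDef]
              exact Set.mem_iUnion.mpr ⟨⟨k, by omega⟩, hmemN⟩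
          have hfk : ∀ k ∈ Finset.range (r + 1),
              (-1 : ℝ) ^ (r + k) * (r.choose k : ℝ) * f (x + (k : ℝ) • h)
                = (-1 : ℝ) ^ (r + k) * (r.choose k : ℝ) *
                  MvPolynomial.eval (fun i => x i + (k : ℝ) * h i) Q := by
            intro k hk
            congr 1
            rw [hfQ _ (hpt k hk).1 (hpt k hk).2]
            congr 1
          rw [Finset.sum_congr rfl hfk]
          exact lemD Q hQdeg (fun i => x i) (fun i => h i)
        · rw [rDiff, Set.indicator_of_notMem hseg]
      have hae : ∀ᵐ x ∂(volume.restrict S), rDiff r f S h x = 0 := by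
        rw [MeasureTheory.ae_iff]
        have hsub : {a | ¬ rDiff r f S h a = 0} ⊆ Bad := by
          intro x hx
          by_contra hxB
          exact hx (hz x hxB)
        refine measure_mono_null hsub ?_
        exact le_antisymm
          (le_trans (Measure.restrict_apply_le _ _) (le_of_eq hBadnull)) (zero_le ..)
      rw [eLpNorm_congr_ae hae]
      exact eLpNorm_zero'
    -- the term of the Besov sum
    have hterm0_deep : ∀ l j, Lcuts.length ≤ l →
        (volume (treeCells Ω₀ cfun l j) ^ (-α)
          * modulusR r f (treeCells Ω₀ cfun l j) τ) ^ τ = 0 := by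
      intro l j hl
      rw [hdeep l j hl, mul_zero, ENNReal.zero_rpow_of_pos hτ]
    have hterm0_large : ∀ l j, 2 ^ l ≤ j →
        (volume (treeCells Ω₀ cfun l j) ^ (-α)
          * modulusR r f (treeCells Ω₀ cfun l j) τ) ^ τ = 0 := by
      intro l j hj
      rw [treeCells_empty_of_large l j hj, hmod0 ∅ (by simp), mul_zero,
        ENNReal.zero_rpow_of_pos hτ]
    have htermlt : ∀ l j,
        (volume (treeCells Ω₀ cfun l j) ^ (-α)
          * modulusR r f (treeCells Ω₀ cfun l j) τ) ^ τ < ⊤ := by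
      intro l j
      by_cases hv : volume (treeCells Ω₀ cfun l j) = 0
      · rw [hmod0 _ hv, mul_zero, ENNReal.zero_rpow_of_pos hτ]
        exact ENNReal.zero_lt_top
      · have h1 : volume (treeCells Ω₀ cfun l j) ^ (-α) < ⊤ := by
          rw [ENNReal.rpow_neg]
          refine ENNReal.inv_lt_top.mpr ?_
          refine ENNReal.rpow_pos (by positivity) ?_
          exact (lt_of_le_of_lt (measure_mono (treeCells_subset l j)) hΩvol).ne
        have h2 : modulusR r f (treeCells Ω₀ cfun l j) τ < ⊤ :=
          lt_of_le_of_lt (hmodbd _ (treeCells_subset l j)) hBndlt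
        exact ENNReal.rpow_lt_top_of_nonneg hτ.le (ENNReal.mul_lt_top h1 h2).ne
    rw [besovTreeSeminormTau]
    have hinner : ∀ l, (∑' j, (volume (treeCells Ω₀ cfun l j) ^ (-α)
          * modulusR r f (treeCells Ω₀ cfun l j) τ) ^ τ)
        = ∑ j ∈ Finset.range (2 ^ l), (volume (treeCells Ω₀ cfun l j) ^ (-α)
          * modulusR r f (treeCells Ω₀ cfun l j) τ) ^ τ := by
      intro l
      exact tsum_eq_sum fun j hj => hterm0_large l j (by simpa using hj)
    calc (∑' (l : ℕ) (j : ℕ), (volume (treeCells Ω₀ cfun l j) ^ (-α)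
          * modulusR r f (treeCells Ω₀ cfun l j) τ) ^ τ)
        = ∑ l ∈ Finset.range Lcuts.length, ∑' (j : ℕ),
            (volume (treeCells Ω₀ cfun l j) ^ (-α)
              * modulusR r f (treeCells Ω₀ cfun l j) τ) ^ τ := by
          refine tsum_eq_sum fun l hl => ?_
          rw [hinner l]
          exact Finset.sum_eq_zero fun j _ => hterm0_deep l j (by simpa using hl)
      _ < ⊤ := by
          refine ENNReal.sum_lt_top.mpr fun l _ => ?_
          rw [hinner l]
          exact ENNReal.sum_lt_top.mpr fun j _ => htermlt l j
end

section
/- (Dimension-free direct bound.) Let 𝒯 be a tree satisfying the geometric decay condition |Ω′| ≤ ρ|Ω| for children, with 0 < ρ < 1. Let f : Ω₀ → ℝ^{L−1}, 0 < p < ∞, α > 0, and 1/τ = α + 1/p. Then N_τ(f,𝒯)^τ ≤ C(τ, ρ, α) · |f|^τ_{B̃_τ^{α,1}(𝒯)}, where C does not depend on the ambient dimension n. -/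
open MeasureTheory
open scoped ENNReal

/-- The mean `E⃗_Ω` of `f` over `Ω`. -/
noncomputable def cellMean {n d : ℕ} (f : (Fin n → ℝ) → EuclideanSpace ℝ (Fin d))
    (Ω : Set (Fin n → ℝ)) : EuclideanSpace ℝ (Fin d) := ⨍ x in Ω, f x

/-- The `τ`-th power of the averaged-modulus Besov semi-norm
`|f|_{B̃_τ^{α,1}(𝒯)} = (Σ_{Ω∈𝒯} (|Ω|^{-α} w₁(f,Ω)_τ)^τ)^{1/τ}`, where
`w₁(f,Ω)_τ^τ = ∫_Ω ‖f - E⃗_Ω‖_{ℓ₂}^τ`; node `(l,j)` is the `j`-th cell at level `l`. -/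
noncomputable def besovTildeTau {n d : ℕ} (α τ : ℝ)
    (f : (Fin n → ℝ) → EuclideanSpace ℝ (Fin d))
    (cells : ℕ → ℕ → Set (Fin n → ℝ)) : ℝ≥0∞ :=
  ∑' (l : ℕ) (j : ℕ), volume (cells l j) ^ (-(α * τ)) *
    ∫⁻ x in cells l j, (‖f x - cellMean f (cells l j)‖₊ : ℝ≥0∞) ^ τ

/-- The `τ`-th power of the tree sparsity `N_τ(f,𝒯) = (Σ_{Ω'≠Ω₀} ‖ψ_{Ω'}‖_p^τ)^{1/τ}`, where
`‖ψ_{Ω'}‖_p^τ = ‖E⃗_{Ω'} - E⃗_Ω‖_{ℓ₂}^τ |Ω'|^{τ/p}` (`Ω` the parent of `Ω'`); the cells at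
level `l+1` with index `j` have parent `(l, j/2)`. -/
noncomputable def sparsityTau {n d : ℕ} (τ p : ℝ)
    (f : (Fin n → ℝ) → EuclideanSpace ℝ (Fin d))
    (cells : ℕ → ℕ → Set (Fin n → ℝ)) : ℝ≥0∞ :=
  ∑' (l : ℕ) (j : ℕ),
    (‖cellMean f (cells (l + 1) j) - cellMean f (cells l (j / 2))‖₊ : ℝ≥0∞) ^ τ *
      volume (cells (l + 1) j) ^ (τ / p)

/-- Dimension-free direct bound: for a tree with geometric decay parameter `ρ`,
`N_τ(f,𝒯)^τ ≤ C(τ,ρ,α) |f|^τ_{B̃_τ^{α,1}(𝒯)}`, with `C` independent of the ambient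
dimension `n` (and of `f`, the tree, and the value dimension). Here `1/τ = α + 1/p`. -/
theorem stmt_8 (ρ α p τ : ℝ) (hρ0 : 0 < ρ) (hρ1 : ρ < 1) (hα : 0 < α) (hp : 0 < p)
    (hτ0 : 0 < τ) (hτ : 1 / τ = α + 1 / p) :
    ∃ C : ℝ, 0 < C ∧
      ∀ (n d : ℕ) (cells : ℕ → ℕ → Set (Fin n → ℝ))
        (f : (Fin n → ℝ) → EuclideanSpace ℝ (Fin d)),
        (∀ l j, MeasurableSet (cells l j)) →
        (∀ j, j ≠ 0 → cells 0 j = ∅) →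
        (∀ l j, cells (l + 1) (2 * j) ∪ cells (l + 1) (2 * j + 1) = cells l j) →
        (∀ l j, Disjoint (cells (l + 1) (2 * j)) (cells (l + 1) (2 * j + 1))) →
        (∀ l j, volume (cells (l + 1) j) ≤ ENNReal.ofReal ρ * volume (cells l (j / 2))) →
        volume (cells 0 0) < ⊤ →
        IntegrableOn f (cells 0 0) →
        sparsityTau τ p f cells ≤ ENNReal.ofReal C * besovTildeTau α τ f cells := by
  have hρ' : (0 : ℝ) < 1 - ρ := by linarith
  have hατ : 0 < α * τ := mul_pos hα hτ0
  have h2τ : (0 : ℝ) < 2 ^ τ := Real.rpow_pos_of_pos two_pos τ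
  have hRpos : (0 : ℝ) < (1 - ρ) ^ (-(α * τ)) := Real.rpow_pos_of_pos hρ' _
  refine ⟨2 ^ τ + 2 ^ τ * (1 - ρ) ^ (-(α * τ)) * 2, by nlinarith, ?_⟩
  intro n d cells f hmeas hempty hunion hdisj hdecay hfin0 hint
  set R : ℝ≥0∞ := ENNReal.ofReal (1 - ρ) ^ (-(α * τ)) with hRdef
  set Bsv : ℕ → ℕ → ℝ≥0∞ := fun l j => volume (cells l j) ^ (-(α * τ)) *
    ∫⁻ x in cells l j, (‖f x - cellMean f (cells l j)‖₊ : ℝ≥0∞) ^ τ with hBsv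
  -- finiteness of all cell volumes
  have hfin : ∀ l j, volume (cells l j) < ⊤ := by
    intro l
    induction l with
    | zero =>
      intro j
      rcases Nat.eq_zero_or_pos j with h | h
      · subst h; exact hfin0
      · rw [hempty j h.ne']; simp
    | succ l ih =>
      intro j
      exact lt_of_le_of_lt (hdecay l j)
        (ENNReal.mul_lt_top ENNReal.ofReal_lt_top (ih _))
  -- children are subsets of parents
  have hsub : ∀ l j, cells (l + 1) j ⊆ cells l (j / 2) := by
    intro l j
    have hj : j = 2 * (j / 2) ∨ j = 2 * (j / 2) + 1 := by omega
    rw [← hunion l (j / 2)]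
    rcases hj with h | h
    · nth_rewrite 1 [h]; exact Set.subset_union_left
    · nth_rewrite 1 [h]; exact Set.subset_union_right
  -- every cell is contained in the root modulo empties
  have hsub0 : ∀ l j, cells l j ⊆ cells 0 (j / 2 ^ l) := by
    intro l
    induction l with
    | zero => intro j; simp
    | succ l ih =>
      intro j
      refine (hsub l j).trans ((ih (j / 2)).trans ?_)
      have : j / 2 / 2 ^ l = j / 2 ^ (l + 1) := by
        rw [Nat.div_div_eq_div_mul, pow_succ, mul_comm (2 ^ l) 2]
      rw [this]
  have hres : ∀ l j, volume.restrict (cells l j) ≤ volume.restrict (cells 0 0) := by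
    intro l j
    rcases Nat.eq_zero_or_pos (j / 2 ^ l) with h | h
    · exact Measure.restrict_mono (h ▸ hsub0 l j) le_rfl
    · have : cells l j = ∅ :=
        Set.subset_empty_iff.mp ((hsub0 l j).trans (hempty _ h.ne').subset)
      rw [this, Measure.restrict_empty]
      exact Measure.zero_le _
  have hg : ∀ l j (c : EuclideanSpace ℝ (Fin d)),
      AEMeasurable (fun x => (‖f x - c‖₊ : ℝ≥0∞) ^ τ) (volume.restrict (cells l j)) := by
    intro l j c
    have h1 : AEStronglyMeasurable f (volume.restrict (cells l j)) :=
      hint.aestronglyMeasurable.mono_measure (hres l j)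
    have h2 : AEStronglyMeasurable (fun x => f x - c) (volume.restrict (cells l j)) :=
      h1.sub aestronglyMeasurable_const
    exact (ENNReal.continuous_rpow_const.measurable).comp_aemeasurable h2.enorm
  have h2ne : ((2 : ℝ≥0∞) ^ τ) ≠ ⊤ :=
    ENNReal.rpow_ne_top_of_nonneg hτ0.le (by norm_num)
  -- exponent arithmetic
  have hτp : τ / p = 1 + -(α * τ) := by
    have h1 : τ * (1 / τ) = τ * (α + 1 / p) := by rw [hτ]
    rw [mul_add, mul_one_div, mul_one_div, div_self hτ0.ne'] at h1
    linarith
  -- key per-node estimate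
  have key : ∀ l j,
      (‖cellMean f (cells (l + 1) j) - cellMean f (cells l (j / 2))‖₊ : ℝ≥0∞) ^ τ *
          volume (cells (l + 1) j) ^ (τ / p)
        ≤ 2 ^ τ * Bsv (l + 1) j + 2 ^ τ * R * Bsv l (j / 2) := by
    intro l j
    set Ω' := cells (l + 1) j with hΩ'
    set Ω := cells l (j / 2) with hΩ
    set E' := cellMean f Ω' with hE'
    set E := cellMean f Ω with hE
    set v' := volume Ω' with hv'def
    set v := volume Ω with hvdef
    by_cases hv : v = 0
    · have hv'0 : v' = 0 := by
        have := hdecay l j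
        rw [← hΩ', ← hΩ, ← hv'def, ← hvdef, hv, mul_zero] at this
        exact le_antisymm this zero_le
      rw [hv'0, ENNReal.zero_rpow_of_pos (by positivity : 0 < τ / p), mul_zero]
      exact zero_le
    · have hvt : v ≠ ⊤ := (hfin _ _).ne
      have hv't : v' ≠ ⊤ := (hfin _ _).ne
      -- lower bound on v'
      have hlow : ENNReal.ofReal (1 - ρ) * v ≤ v' := by
        set m := j / 2 with hm
        have hvol : volume (cells (l + 1) (2 * m)) + volume (cells (l + 1) (2 * m + 1)) = v := by
          rw [← measure_union (hdisj l m) (hmeas _ _), hunion l m]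
        have hj : j = 2 * m ∨ j = 2 * m + 1 := by omega
        obtain ⟨s, hs, hseq⟩ : ∃ s, s / 2 = m ∧ v' + volume (cells (l + 1) s) = v := by
          rcases hj with h | h
          · exact ⟨2 * m + 1, by omega, by rw [hv'def, hΩ', h]; exact hvol⟩
          · exact ⟨2 * m, by omega, by rw [hv'def, hΩ', h, add_comm]; exact hvol⟩
        have hsb : volume (cells (l + 1) s) ≤ ENNReal.ofReal ρ * v := by
          have := hdecay l s
          rwa [hs, ← hΩ, ← hvdef] at this
        have hsum : ENNReal.ofReal (1 - ρ) * v + volume (cells (l + 1) s)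
            ≤ v' + volume (cells (l + 1) s) := by
          rw [hseq]
          calc ENNReal.ofReal (1 - ρ) * v + volume (cells (l + 1) s)
              ≤ ENNReal.ofReal (1 - ρ) * v + ENNReal.ofReal ρ * v := by gcongr
            _ = (ENNReal.ofReal (1 - ρ) + ENNReal.ofReal ρ) * v := by ring
            _ = v := by
                rw [← ENNReal.ofReal_add (by linarith) hρ0.le]
                norm_num
        exact (ENNReal.add_le_add_iff_right
          (lt_of_le_of_lt hsb (ENNReal.mul_lt_top ENNReal.ofReal_lt_top (hfin _ _))).ne).mp hsum
      have hv'0 : v' ≠ 0 := by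
        intro h
        rw [h, le_zero_iff] at hlow
        exact (ENNReal.mul_pos (ENNReal.ofReal_pos.mpr hρ').ne' hv).ne' hlow
      set c : ℝ≥0∞ := (‖E' - E‖₊ : ℝ≥0∞) with hc
      -- pointwise estimate
      have hpt : ∀ x, c ^ τ ≤
          2 ^ τ * ((‖f x - E'‖₊ : ℝ≥0∞) ^ τ + (‖f x - E‖₊ : ℝ≥0∞) ^ τ) := by
        intro x
        have h1 : ‖E' - E‖₊ ≤ ‖f x - E'‖₊ + ‖f x - E‖₊ := by
          calc ‖E' - E‖₊ = ‖(E' - f x) + (f x - E)‖₊ := by abel_nf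
            _ ≤ ‖E' - f x‖₊ + ‖f x - E‖₊ := nnnorm_add_le _ _
            _ = ‖f x - E'‖₊ + ‖f x - E‖₊ := by rw [← neg_sub (f x) E', nnnorm_neg]
        calc c ^ τ ≤ ((‖f x - E'‖₊ : ℝ≥0∞) + (‖f x - E‖₊ : ℝ≥0∞)) ^ τ := by
              rw [hc]
              refine ENNReal.rpow_le_rpow ?_ hτ0.le
              exact_mod_cast h1
          _ ≤ (2 * max (‖f x - E'‖₊ : ℝ≥0∞) (‖f x - E‖₊ : ℝ≥0∞)) ^ τ := by
              refine ENNReal.rpow_le_rpow ?_ hτ0.le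
              rw [two_mul]
              exact add_le_add (le_max_left _ _) (le_max_right _ _)
          _ = 2 ^ τ * (max (‖f x - E'‖₊ : ℝ≥0∞) (‖f x - E‖₊ : ℝ≥0∞)) ^ τ :=
              ENNReal.mul_rpow_of_nonneg _ _ hτ0.le
          _ ≤ 2 ^ τ * ((‖f x - E'‖₊ : ℝ≥0∞) ^ τ + (‖f x - E‖₊ : ℝ≥0∞) ^ τ) := by
              gcongr
              rcases le_total ((‖f x - E'‖₊ : ℝ≥0∞)) ((‖f x - E‖₊ : ℝ≥0∞)) with h | h
              · rw [max_eq_right h]; exact le_add_self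
              · rw [max_eq_left h]; exact self_le_add_right _ _
      set A' : ℝ≥0∞ := ∫⁻ x in Ω', (‖f x - E'‖₊ : ℝ≥0∞) ^ τ with hA'
      set B' : ℝ≥0∞ := ∫⁻ x in Ω', (‖f x - E‖₊ : ℝ≥0∞) ^ τ with hB'
      set B : ℝ≥0∞ := ∫⁻ x in Ω, (‖f x - E‖₊ : ℝ≥0∞) ^ τ with hB
      have hstep : c ^ τ * v' ≤ 2 ^ τ * (A' + B') := by
        have h0 : c ^ τ * v' = ∫⁻ _x in Ω', c ^ τ := (setLIntegral_const _ _).symm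
        rw [h0, hA', hB']
        calc (∫⁻ _x in Ω', c ^ τ)
            ≤ ∫⁻ x in Ω', 2 ^ τ * ((‖f x - E'‖₊ : ℝ≥0∞) ^ τ + (‖f x - E‖₊ : ℝ≥0∞) ^ τ) :=
              lintegral_mono fun x => hpt x
          _ = 2 ^ τ * ∫⁻ x in Ω', ((‖f x - E'‖₊ : ℝ≥0∞) ^ τ + (‖f x - E‖₊ : ℝ≥0∞) ^ τ) :=
              lintegral_const_mul' _ _ h2ne
          _ = 2 ^ τ * ((∫⁻ x in Ω', (‖f x - E'‖₊ : ℝ≥0∞) ^ τ) +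
                ∫⁻ x in Ω', (‖f x - E‖₊ : ℝ≥0∞) ^ τ) := by
              rw [lintegral_add_left' (hg (l + 1) j E')]
      have hsplit : v' ^ (τ / p) = v' * v' ^ (-(α * τ)) := by
        rw [hτp, ENNReal.rpow_add _ _ hv'0 hv't, ENNReal.rpow_one]
      have hmono : v' ^ (-(α * τ)) ≤ R * v ^ (-(α * τ)) := by
        calc v' ^ (-(α * τ)) = (v' ^ (α * τ))⁻¹ := ENNReal.rpow_neg _ _
          _ ≤ ((ENNReal.ofReal (1 - ρ) * v) ^ (α * τ))⁻¹ := by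
              exact ENNReal.inv_le_inv.mpr (ENNReal.rpow_le_rpow hlow hατ.le)
          _ = (ENNReal.ofReal (1 - ρ) * v) ^ (-(α * τ)) := (ENNReal.rpow_neg _ _).symm
          _ = R * v ^ (-(α * τ)) := by
              rw [ENNReal.mul_rpow_of_ne_zero (ENNReal.ofReal_pos.mpr hρ').ne' hv]
      have hBB : B' ≤ B := lintegral_mono_set (hsub l j)
      calc c ^ τ * v' ^ (τ / p) = (c ^ τ * v') * v' ^ (-(α * τ)) := by
            rw [hsplit]; ring
        _ ≤ (2 ^ τ * (A' + B')) * v' ^ (-(α * τ)) := by gcongr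
        _ = 2 ^ τ * (v' ^ (-(α * τ)) * A') + 2 ^ τ * (v' ^ (-(α * τ)) * B') := by ring
        _ ≤ 2 ^ τ * (v' ^ (-(α * τ)) * A') + 2 ^ τ * ((R * v ^ (-(α * τ))) * B) := by
            gcongr
        _ = 2 ^ τ * Bsv (l + 1) j + 2 ^ τ * R * Bsv l (j / 2) := by
            rw [hBsv]
            dsimp only
            rw [← hΩ', ← hΩ, ← hE', ← hE, ← hv'def, ← hvdef, ← hA', ← hB]
            ring
  -- sum everything
  have h1 : sparsityTau τ p f cells ≤
      ∑' (l : ℕ) (j : ℕ), (2 ^ τ * Bsv (l + 1) j + 2 ^ τ * R * Bsv l (j / 2)) :=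
    ENNReal.tsum_le_tsum fun l => ENNReal.tsum_le_tsum fun j => key l j
  have hsplitsum : (∑' (l : ℕ) (j : ℕ), (2 ^ τ * Bsv (l + 1) j + 2 ^ τ * R * Bsv l (j / 2)))
      = 2 ^ τ * (∑' (l : ℕ) (j : ℕ), Bsv (l + 1) j) +
        (2 ^ τ * R * 2) * (∑' (l : ℕ) (j : ℕ), Bsv l j) := by
    have hhalf : ∀ l, (∑' j : ℕ, Bsv l (j / 2)) = 2 * ∑' m : ℕ, Bsv l m := by
      intro l
      have he := tsum_even_add_odd (f := fun j => Bsv l (j / 2))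
        ENNReal.summable ENNReal.summable
      rw [← he]
      have e1 : ∀ k : ℕ, 2 * k / 2 = k := fun k => by omega
      have e2 : ∀ k : ℕ, (2 * k + 1) / 2 = k := fun k => by omega
      simp only [e1, e2]
      rw [two_mul]
    calc (∑' (l : ℕ) (j : ℕ), (2 ^ τ * Bsv (l + 1) j + 2 ^ τ * R * Bsv l (j / 2)))
        = (∑' (l : ℕ) (j : ℕ), 2 ^ τ * Bsv (l + 1) j) +
          ∑' (l : ℕ) (j : ℕ), 2 ^ τ * R * Bsv l (j / 2) := by
          rw [← ENNReal.tsum_add]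
          exact tsum_congr fun l => ENNReal.tsum_add
      _ = 2 ^ τ * (∑' (l : ℕ) (j : ℕ), Bsv (l + 1) j) +
          (2 ^ τ * R * 2) * (∑' (l : ℕ) (j : ℕ), Bsv l j) := by
          congr 1
          · rw [← ENNReal.tsum_mul_left]
            exact tsum_congr fun l => ENNReal.tsum_mul_left
          · calc (∑' (l : ℕ) (j : ℕ), 2 ^ τ * R * Bsv l (j / 2))
                = ∑' (l : ℕ), 2 ^ τ * R * ∑' (j : ℕ), Bsv l (j / 2) :=
                  tsum_congr fun l => ENNReal.tsum_mul_left
              _ = ∑' (l : ℕ), (2 ^ τ * R * 2) * ∑' (j : ℕ), Bsv l j := by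
                  refine tsum_congr fun l => ?_
                  rw [hhalf l]; ring
              _ = (2 ^ τ * R * 2) * ∑' (l : ℕ) (j : ℕ), Bsv l j := ENNReal.tsum_mul_left
  have hshift : (∑' (l : ℕ) (j : ℕ), Bsv (l + 1) j) ≤ ∑' (l : ℕ) (j : ℕ), Bsv l j := by
    have : Function.Injective (fun l : ℕ => l + 1) := fun a b h => by simpa using h
    exact ENNReal.tsum_comp_le_tsum_of_injective this fun l => ∑' j, Bsv l j
  have hBeq : besovTildeTau α τ f cells = ∑' (l : ℕ) (j : ℕ), Bsv l j := rfl
  have hfinal : sparsityTau τ p f cells ≤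
      (2 ^ τ + 2 ^ τ * R * 2) * besovTildeTau α τ f cells := by
    rw [hBeq]
    calc sparsityTau τ p f cells
        ≤ 2 ^ τ * (∑' (l : ℕ) (j : ℕ), Bsv (l + 1) j) +
          (2 ^ τ * R * 2) * (∑' (l : ℕ) (j : ℕ), Bsv l j) := by
          rw [← hsplitsum]; exact h1
      _ ≤ 2 ^ τ * (∑' (l : ℕ) (j : ℕ), Bsv l j) +
          (2 ^ τ * R * 2) * (∑' (l : ℕ) (j : ℕ), Bsv l j) := by gcongr
      _ = (2 ^ τ + 2 ^ τ * R * 2) * (∑' (l : ℕ) (j : ℕ), Bsv l j) := by ring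
  refine hfinal.trans ?_
  gcongr
  have e2 : (2 : ℝ≥0∞) ^ τ = ENNReal.ofReal ((2 : ℝ) ^ τ) := by
    rw [← ENNReal.ofReal_rpow_of_pos two_pos]
    norm_num
  have eR : R = ENNReal.ofReal ((1 - ρ) ^ (-(α * τ))) := by
    rw [hRdef, ENNReal.ofReal_rpow_of_pos hρ']
  rw [e2, eR, show ((2 : ℝ≥0∞)) = ENNReal.ofReal 2 by norm_num,
    ← ENNReal.ofReal_mul h2τ.le, ← ENNReal.ofReal_mul (by positivity),
    ← ENNReal.ofReal_add h2τ.le (by positivity)]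
end
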